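/- Sub-optimality of the discrete information projection: with Q = {q ∈ Δ(Y) : argmax q ≠ argmax p} and Q_{n,-} = {q ∈ Δ(Y) ∩ n^{-1}ℕ^Y : y_1 ∉ argmax q}, one has min_{q ∈ Q_{n,-}} D(q‖p) ≤ min_{q ∈ Q} D(q‖p) + C_p/n for a constant C_p depending only on p (and m), for all n larger than m. -/

import Mathlib

open Finset Real


lemma tangent_le {p a x : ℝ} (hp : 0 < p) (ha : 0 < a) (hx : 0 ≤ x) :
    (Real.log (a / p) + 1) * x - a ≤ x * Real.log (x / p) := by
  rcases eq_or_lt_of_le hx with h | h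
  · simp [← h]; linarith
  · have hlog : Real.log (a / x) ≤ a / x - 1 := Real.log_le_sub_one_of_pos (by positivity)
    have h1 : Real.log (x / p) = Real.log (x / a) + Real.log (a / p) := by
      rw [Real.log_div h.ne' hp.ne', Real.log_div ha.ne' hp.ne', Real.log_div h.ne' ha.ne']
      ring
    have h2 : Real.log (a / x) = - Real.log (x / a) := by
      rw [Real.log_div h.ne' ha.ne', Real.log_div ha.ne' h.ne']; ring
    have h3 : x - a ≤ x * Real.log (x / a) := by
      have := mul_le_mul_of_nonneg_left hlog (le_of_lt h)
      rw [h2] at this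
      have hax : x * (a / x - 1) = a - x := by field_simp
      nlinarith
    rw [h1]; nlinarith

lemma upper_floor {p a x : ℝ} (hp : 0 < p) (ha : 0 < a) (hx : 0 ≤ x) (hxa : x ≤ a) :
    x * Real.log (x / p) ≤ a * Real.log (a / p) + (a - x) * |Real.log (a / p)| := by
  rcases eq_or_lt_of_le hx with h | h
  · simp [← h]
    nlinarith [mul_nonneg ha.le (show (0:ℝ) ≤ Real.log (a/p) + |Real.log (a/p)| by
      linarith [neg_abs_le (Real.log (a/p))])]
  · have h1 : Real.log (x / p) = Real.log (x / a) + Real.log (a / p) := by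
      rw [Real.log_div h.ne' hp.ne', Real.log_div ha.ne' hp.ne', Real.log_div h.ne' ha.ne']
      ring
    have h2 : Real.log (x / a) ≤ 0 := Real.log_nonpos (by positivity) (by
      rw [div_le_one ha]; exact hxa)
    have h3 : x * Real.log (a/p) ≤ a * Real.log (a/p) + (a - x) * |Real.log (a / p)| := by
      nlinarith [le_abs_self (Real.log (a/p)), neg_abs_le (Real.log (a/p))]
    rw [h1]; nlinarith

lemma upper_ceil {p a x : ℝ} (hp : 0 < p) (ha : 0 < a) (hax : a ≤ x) (hx1 : x ≤ 1) :
    x * Real.log (x / p) ≤ a * Real.log (a / p) + (x - a) * (|Real.log (a / p)| + 1/a) := by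
  have h : 0 < x := lt_of_lt_of_le ha hax
  have h1 : Real.log (x / p) = Real.log (x / a) + Real.log (a / p) := by
    rw [Real.log_div h.ne' hp.ne', Real.log_div ha.ne' hp.ne', Real.log_div h.ne' ha.ne']
    ring
  have h2 : Real.log (x / a) ≤ x / a - 1 := Real.log_le_sub_one_of_pos (by positivity)
  have h4 : x * Real.log (x/a) ≤ (x - a) / a := by
    have hh : x * Real.log (x/a) ≤ x * (x/a - 1) := mul_le_mul_of_nonneg_left h2 h.le
    have hxx : x * (x/a - 1) = x * (x - a) / a := by field_simp
    have hmm : x * (x - a) ≤ (x - a) := by nlinarith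
    have := (div_le_div_iff_of_pos_right ha).mpr hmm
    linarith [hxx ▸ hh]
  have h3 : x * Real.log (a/p) ≤ a * Real.log (a/p) + (x - a) * |Real.log (a / p)| := by
    nlinarith [le_abs_self (Real.log (a/p)), neg_abs_le (Real.log (a/p))]
  have h5 : (x - a) * (|Real.log (a / p)| + 1/a) = (x - a) * |Real.log (a / p)| + (x - a)/a := by
    ring
  rw [h1, h5]; nlinarith


lemma sumT_eq {Y : Type*} [Fintype Y] [DecidableEq Y] (p : Y → ℝ) (hp : ∀ y, 0 < p y)
    (hpsum : ∑ y, p y = 1) (y1 z : Y) (hne : z ≠ y1)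
    (q' : Y → ℝ) (hq's : ∑ y, q' y = 1) :
    ∑ y, ((Real.log ((if y = y1 ∨ y = z then Real.sqrt (p y1 * p z) else p y)
            / (1 - p y1 - p z + 2 * Real.sqrt (p y1 * p z)) / p y) + 1) * q' y
        - (if y = y1 ∨ y = z then Real.sqrt (p y1 * p z) else p y)
            / (1 - p y1 - p z + 2 * Real.sqrt (p y1 * p z)))
      = -Real.log (1 - p y1 - p z + 2 * Real.sqrt (p y1 * p z))
        + (Real.log (Real.sqrt (p y1 * p z)) - Real.log (p y1)) * (q' y1 - q' z) := by
  set w : ℝ := Real.sqrt (p y1 * p z) with hw_def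
  have hw : 0 < w := Real.sqrt_pos.2 (mul_pos (hp y1) (hp z))
  have hsum_pair : p y1 + p z ≤ 1 := by
    have h := Finset.sum_le_sum_of_subset_of_nonneg (Finset.subset_univ ({y1, z} : Finset Y))
      (fun y _ _ => (hp y).le)
    rw [Finset.sum_pair (Ne.symm hne), hpsum] at h
    exact h
  set S : ℝ := 1 - p y1 - p z + 2 * w with hS_def
  have hS : 0 < S := by nlinarith
  have hlogw : Real.log w = (Real.log (p y1) + Real.log (p z)) / 2 := by
    rw [hw_def, Real.log_sqrt (mul_pos (hp y1) (hp z)).le,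
      Real.log_mul (hp y1).ne' (hp z).ne']
  have hpt : ∀ y, ((Real.log ((if y = y1 ∨ y = z then w else p y) / S / p y) + 1) * q' y
        - (if y = y1 ∨ y = z then w else p y) / S)
      = ((1 - Real.log S) * q' y - p y / S)
        + (if y = y1 then (Real.log w - Real.log (p y1)) * q' y - (w - p y1)/S else 0)
        + (if y = z then (Real.log w - Real.log (p z)) * q' y - (w - p z)/S else 0) := by
    intro y
    have hlogdiv : ∀ u : Y, Real.log (w / S / p u) = Real.log w - Real.log S - Real.log (p u) := by
      intro u
      rw [Real.log_div (by positivity) (hp u).ne', Real.log_div hw.ne' hS.ne']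
    by_cases hy1 : y = y1
    · subst hy1
      simp only [eq_self_iff_true, true_or, if_true, if_neg (Ne.symm hne ∘ Eq.symm)]
      rw [hlogdiv y]
      by_cases hyz : y = z
      · exact absurd hyz.symm (by intro hc; exact hne (hc.trans rfl))
      · rw [if_neg hyz]; ring
    · by_cases hyz : y = z
      · subst hyz
        simp only [eq_self_iff_true, or_true, if_true, if_neg hy1]
        rw [hlogdiv y]; ring
      · simp only [if_neg (by tauto : ¬(y = y1 ∨ y = z)), if_neg hy1, if_neg hyz]
        have hq : p y / S / p y = 1 / S := by
          rw [div_div, mul_comm, ← div_div, div_self (hp y).ne']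
        rw [hq, Real.log_div one_ne_zero hS.ne', Real.log_one]; ring
  rw [Finset.sum_congr rfl (fun y _ => hpt y)]
  rw [Finset.sum_add_distrib, Finset.sum_add_distrib, Finset.sum_ite_eq' Finset.univ y1,
    Finset.sum_ite_eq' Finset.univ z]
  simp only [Finset.mem_univ, if_true]
  have hsplit : ∑ y, ((1 - Real.log S) * q' y - p y / S)
      = (1 - Real.log S) * 1 - 1/S := by
    rw [Finset.sum_sub_distrib, ← Finset.mul_sum, hq's, ← Finset.sum_div, hpsum]
  rw [hsplit]
  have hzlog : Real.log w - Real.log (p z) = -(Real.log w - Real.log (p y1)) := by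
    rw [hlogw]; ring
  rw [hzlog]
  have hSS : (w - p y1)/S + (w - p z)/S + 1/S = 1 := by
    rw [← add_div, ← add_div,
      show w - p y1 + (w - p z) + 1 = S by rw [hS_def]; ring, div_self hS.ne']
  linear_combination -hSS

lemma lower_aux {Y : Type*} [Fintype Y] [DecidableEq Y] (p : Y → ℝ) (hp : ∀ y, 0 < p y)
    (hpsum : ∑ y, p y = 1) (y1 z : Y) (hne : z ≠ y1) (hzlt : p z < p y1)
    (q' : Y → ℝ) (hq0 : ∀ y, 0 ≤ q' y) (hq's : ∑ y, q' y = 1) (hqle : q' y1 ≤ q' z) :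
    -Real.log (1 - p y1 - p z + 2 * Real.sqrt (p y1 * p z))
      ≤ ∑ y, q' y * Real.log (q' y / p y) := by
  set w : ℝ := Real.sqrt (p y1 * p z) with hw_def
  have hw : 0 < w := Real.sqrt_pos.2 (mul_pos (hp y1) (hp z))
  have hsum_pair : p y1 + p z ≤ 1 := by
    have h := Finset.sum_le_sum_of_subset_of_nonneg (Finset.subset_univ ({y1, z} : Finset Y))
      (fun y _ _ => (hp y).le)
    rw [Finset.sum_pair (Ne.symm hne), hpsum] at h
    exact h
  set S : ℝ := 1 - p y1 - p z + 2 * w with hS_def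
  have hS : 0 < S := by nlinarith
  have hkey := sumT_eq p hp hpsum y1 z hne q' hq's
  have hsum_le : ∑ y, ((Real.log ((if y = y1 ∨ y = z then w else p y) / S / p y) + 1) * q' y
        - (if y = y1 ∨ y = z then w else p y) / S)
      ≤ ∑ y, q' y * Real.log (q' y / p y) := by
    apply Finset.sum_le_sum
    intro y _
    refine tangent_le (hp y) ?_ (hq0 y)
    by_cases h : y = y1 ∨ y = z
    · rw [if_pos h]; exact div_pos hw hS
    · rw [if_neg h]; exact div_pos (hp y) hS
  rw [hkey] at hsum_le
  have hwp1 : w ≤ p y1 := by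
    rw [hw_def]
    calc Real.sqrt (p y1 * p z) ≤ Real.sqrt (p y1 * p y1) :=
          Real.sqrt_le_sqrt (mul_le_mul_of_nonneg_left hzlt.le (hp y1).le)
      _ = p y1 := by rw [Real.sqrt_mul_self (hp y1).le]
  have hlogle : Real.log w - Real.log (p y1) ≤ 0 :=
    sub_nonpos.2 (Real.log_le_log hw hwp1)
  nlinarith [mul_nonneg (neg_nonneg.2 hlogle) (sub_nonneg.2 hqle)]

lemma S_mono {p1 pz p2 : ℝ} (h1 : 0 < pz) (h2 : pz ≤ p2) (h3 : p2 ≤ p1)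
    (hsum : p1 + pz ≤ 1) :
    -Real.log (1 - p1 - p2 + 2 * Real.sqrt (p1 * p2))
      ≤ -Real.log (1 - p1 - pz + 2 * Real.sqrt (p1 * pz)) := by
  have hp2 : 0 < p2 := lt_of_lt_of_le h1 h2
  have hp1 : 0 < p1 := lt_of_lt_of_le hp2 h3
  set a := Real.sqrt (p1 * pz) with ha_def
  set b := Real.sqrt (p1 * p2) with hb_def
  have ha : 0 < a := Real.sqrt_pos.2 (by positivity)
  have hb : 0 < b := Real.sqrt_pos.2 (by positivity)
  have ha2 : a ^ 2 = p1 * pz := Real.sq_sqrt (by positivity)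
  have hb2 : b ^ 2 = p1 * p2 := Real.sq_sqrt (by positivity)
  have hab : a ≤ b := Real.sqrt_le_sqrt (mul_le_mul_of_nonneg_left h2 hp1.le)
  have hap : a ≤ p1 := by
    rw [ha_def]
    calc Real.sqrt (p1 * pz) ≤ Real.sqrt (p1 * p1) :=
        Real.sqrt_le_sqrt (mul_le_mul_of_nonneg_left (h2.trans h3) hp1.le)
      _ = p1 := Real.sqrt_mul_self hp1.le
  have hbp : b ≤ p1 := by
    rw [hb_def]
    calc Real.sqrt (p1 * p2) ≤ Real.sqrt (p1 * p1) :=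
        Real.sqrt_le_sqrt (mul_le_mul_of_nonneg_left h3 hp1.le)
      _ = p1 := Real.sqrt_mul_self hp1.le
  have hkey : 1 - p1 - pz + 2 * a ≤ 1 - p1 - p2 + 2 * b := by
    nlinarith [mul_nonneg (sub_nonneg.2 hab) (by nlinarith : (0:ℝ) ≤ 2 * p1 - a - b)]
  have hSz : 0 < 1 - p1 - pz + 2 * a := by nlinarith [ha]
  exact neg_le_neg (Real.log_le_log hSz hkey)

set_option maxHeartbeats 1000000 in
theorem discrete_information_projection_suboptimality {Y : Type*} [Fintype Y] [DecidableEq Y]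
    (p : Y → ℝ) (hp0 : ∀ y, 0 ≤ p y) (hp1 : ∑ y, p y = 1)
    (y1 y2 : Y) (h12 : y1 ≠ y2)
    (hmode : ∀ y, y ≠ y1 → p y < p y1)
    (hsec : ∀ y, y ≠ y1 → p y ≤ p y2) (h2 : 0 < p y2) :
    ∃ C : ℝ, ∀ n : ℕ, Fintype.card Y < n →
      ∃ q : Y → ℝ, (∀ y, 0 ≤ q y) ∧ (∑ y, q y = 1) ∧
        (∀ y, ∃ k : ℕ, q y = (k : ℝ) / n) ∧ (∃ z, q y1 < q z) ∧
        ∑ y, q y * Real.log (q y / p y)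
          ≤ sInf {d : ℝ | ∃ q' : Y → ℝ, (∀ y, 0 ≤ q' y) ∧ (∑ y, q' y = 1) ∧
              (∃ z, z ≠ y1 ∧ q' y1 ≤ q' z) ∧ d = ∑ y, q' y * Real.log (q' y / p y)}
            + C / n := by
  classical
  by_cases hfull : ∀ y, 0 < p y
  · -- full support case
    have hp2lt : p y2 < p y1 := hmode y2 (Ne.symm h12)
    have hp1pos : 0 < p y1 := hfull y1
    have hne : Nonempty Y := ⟨y1⟩
    have hpair : ∀ z, z ≠ y1 → p y1 + p z ≤ 1 := by
      intro z hz
      have h := Finset.sum_le_sum_of_subset_of_nonneg (Finset.subset_univ ({y1, z} : Finset Y))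
        (fun y _ _ => (hfull y).le)
      rw [Finset.sum_pair (Ne.symm hz), hp1] at h
      exact h
    set w : ℝ := Real.sqrt (p y1 * p y2) with hw_def
    have hw : 0 < w := Real.sqrt_pos.2 (mul_pos hp1pos h2)
    have hsum_pair : p y1 + p y2 ≤ 1 := hpair y2 (Ne.symm h12)
    set S : ℝ := 1 - p y1 - p y2 + 2 * w with hS_def
    have hS : 0 < S := by nlinarith
    set a : Y → ℝ := fun y => (if y = y1 ∨ y = y2 then w else p y) / S with ha_def
    have hbody : ∀ y, (if y = y1 ∨ y = y2 then w else p y) / S = a y := fun y => by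
      rw [ha_def]
    have hapos : ∀ y, 0 < a y := by
      intro y
      rw [ha_def]; simp only
      by_cases h : y = y1 ∨ y = y2
      · rw [if_pos h]; exact div_pos hw hS
      · rw [if_neg h]; exact div_pos (hfull y) hS
    have ha1 : a y1 = w / S := by rw [ha_def]; simp
    have ha2 : a y2 = w / S := by rw [ha_def]; simp
    have ha12 : a y1 = a y2 := by rw [ha1, ha2]
    have hsa : ∑ y, a y = 1 := by
      have hpt : ∀ y, a y = p y / S + ((if y = y1 then (w - p y)/S else 0)
          + (if y = y2 then (w - p y)/S else 0)) := by
        intro y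
        rw [ha_def]; simp only
        by_cases h1 : y = y1
        · subst h1
          rw [if_pos (Or.inl rfl), if_pos rfl, if_neg h12]
          ring
        · by_cases h2' : y = y2
          · subst h2'
            rw [if_pos (Or.inr rfl), if_neg h1, if_pos rfl]
            ring
          · rw [if_neg (by tauto), if_neg h1, if_neg h2']
            ring
      rw [Finset.sum_congr rfl (fun y _ => hpt y), Finset.sum_add_distrib,
        Finset.sum_add_distrib, Finset.sum_ite_eq' Finset.univ y1,
        Finset.sum_ite_eq' Finset.univ y2]
      simp only [Finset.mem_univ, if_true]
      rw [← Finset.sum_div, hp1]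
      field_simp
      rw [hS_def]; ring
    have hkey := sumT_eq p hfull hp1 y1 y2 (Ne.symm h12) a hsa
    rw [← hw_def, ← hS_def] at hkey
    simp only [hbody] at hkey
    have hsumA : ∑ y, a y * Real.log (a y / p y) = -Real.log S := by
      have hc : ∑ y, ((Real.log (a y / p y) + 1) * a y - a y)
          = ∑ y, a y * Real.log (a y / p y) :=
        Finset.sum_congr rfl (fun y _ => by ring)
      rw [hc, ha12, sub_self, mul_zero, add_zero] at hkey
      exact hkey
    set CA : ℝ := ∑ y, |Real.log (a y / p y)| with hCA_def
    have hCA0 : 0 ≤ CA := by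
      rw [hCA_def]; exact Finset.sum_nonneg (fun y _ => abs_nonneg _)
    have hCAy : ∀ y, |Real.log (a y / p y)| ≤ CA := by
      intro y
      rw [hCA_def]
      exact Finset.single_le_sum (f := fun y => |Real.log (a y / p y)|)
        (fun i _ => abs_nonneg _) (Finset.mem_univ y)
    set m : ℝ := (Fintype.card Y : ℝ) with hm_def
    have hm1 : 1 ≤ m := by
      rw [hm_def]; exact_mod_cast Fintype.card_pos
    refine ⟨2 * CA + 2 * m * (CA + 1 / a y2), fun n hn => ?_⟩
    have hn0 : 0 < n := lt_trans Fintype.card_pos hn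
    have hn0' : (0:ℝ) < n := by exact_mod_cast hn0
    set fl : Y → ℕ := fun y => ⌊(n:ℝ) * a y⌋₊ with hfl_def
    set t : ℕ := ∑ y ∈ Finset.univ.erase y2, (if y = y1 then fl y1 - 1 else fl y) with ht_def
    set k : Y → ℕ := fun y => if y = y2 then n - t else if y = y1 then fl y1 - 1 else fl y
      with hk_def
    set q : Y → ℝ := fun y => (k y : ℝ) / n with hq_def
    have hfl_le : ∀ y, (fl y : ℝ) ≤ (n:ℝ) * a y := fun y =>
      Nat.floor_le (mul_nonneg (by positivity) (hapos y).le)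
    have hfl_gt : ∀ y, (n:ℝ) * a y - 1 < fl y := by
      intro y
      have := Nat.lt_floor_add_one ((n:ℝ) * a y)
      linarith
    have hkt : ∀ y, y ≠ y2 → k y = (if y = y1 then fl y1 - 1 else fl y) := by
      intro y hy; rw [hk_def]; simp only [if_neg hy]
    have hk_le : ∀ y, y ≠ y2 → (k y : ℝ) ≤ (n:ℝ) * a y := by
      intro y hy
      rw [hkt y hy]
      by_cases h1 : y = y1
      · subst h1
        rw [if_pos rfl]
        calc ((fl y - 1 : ℕ) : ℝ) ≤ (fl y : ℝ) := by exact_mod_cast Nat.sub_le _ _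
          _ ≤ (n:ℝ) * a y := hfl_le y
      · rw [if_neg h1]; exact hfl_le y
    have hk_ge : ∀ y, y ≠ y2 → (n:ℝ) * a y - 2 ≤ (k y : ℝ) := by
      intro y hy
      rw [hkt y hy]
      by_cases h1 : y = y1
      · subst h1
        rw [if_pos rfl]
        have hcast : (fl y : ℝ) - 1 ≤ ((fl y - 1 : ℕ) : ℝ) := by
          rcases Nat.eq_zero_or_pos (fl y) with h0 | h0
          · simp [h0]
          · rw [Nat.cast_sub h0]; push_cast; linarith
        have := hfl_gt y
        linarith
      · rw [if_neg h1]
        linarith [hfl_gt y]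
    have hterase : (t:ℝ) = ∑ y ∈ Finset.univ.erase y2, (k y : ℝ) := by
      rw [ht_def, Nat.cast_sum]
      exact Finset.sum_congr rfl (fun y hy => by
        rw [hkt y (Finset.ne_of_mem_erase hy)])
    have hsum_erase_a : ∑ y ∈ Finset.univ.erase y2, a y = 1 - a y2 := by
      rw [Finset.sum_erase_eq_sub (Finset.mem_univ y2), hsa]
    have ht_ub : (t:ℝ) ≤ (n:ℝ) * (1 - a y2) := by
      rw [hterase]
      calc ∑ y ∈ Finset.univ.erase y2, (k y : ℝ)
          ≤ ∑ y ∈ Finset.univ.erase y2, (n:ℝ) * a y :=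
            Finset.sum_le_sum (fun y hy => hk_le y (Finset.ne_of_mem_erase hy))
        _ = (n:ℝ) * (1 - a y2) := by rw [← Finset.mul_sum, hsum_erase_a]
    have ht_ge : (n:ℝ) * (1 - a y2) - 2 * m ≤ (t:ℝ) := by
      rw [hterase]
      have h1 : ∑ y ∈ Finset.univ.erase y2, ((n:ℝ) * a y - 2)
          ≤ ∑ y ∈ Finset.univ.erase y2, (k y : ℝ) :=
        Finset.sum_le_sum (fun y hy => hk_ge y (Finset.ne_of_mem_erase hy))
      have h2' : ∑ y ∈ Finset.univ.erase y2, ((n:ℝ) * a y - 2)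
          = (n:ℝ) * (1 - a y2) - 2 * ((Finset.univ.erase y2).card : ℝ) := by
        rw [Finset.sum_sub_distrib, ← Finset.mul_sum, hsum_erase_a, Finset.sum_const,
          nsmul_eq_mul]
        ring
      have h3 : ((Finset.univ.erase y2).card : ℝ) ≤ m := by
        rw [hm_def]
        exact_mod_cast Finset.card_le_univ _
      nlinarith
    have ht_lt : t < n := by
      have : (t:ℝ) < n := by
        have := mul_pos hn0' (hapos y2)
        nlinarith
      exact_mod_cast this
    have hky2 : (k y2 : ℝ) = (n:ℝ) - t := by
      rw [hk_def]; simp only [if_pos rfl]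
      exact Nat.cast_sub ht_lt.le
    have hexp : (n:ℝ) * (1 - a y2) = n - n * a y2 := by ring
    have hky2_ge : (n:ℝ) * a y2 ≤ (k y2 : ℝ) := by
      rw [hky2]; linarith [ht_ub]
    have hky2_le : (k y2 : ℝ) ≤ (n:ℝ) * a y2 + 2 * m := by
      rw [hky2]; linarith [ht_ge]
    have hq0 : ∀ y, 0 ≤ q y := fun y => by positivity
    have hqsum : ∑ y, q y = 1 := by
      have hsk : ∑ y, (k y : ℝ) = (n:ℝ) := by
        rw [← Finset.add_sum_erase _ _ (Finset.mem_univ y2), hky2, ← hterase]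
        ring
      rw [hq_def]
      simp only
      rw [← Finset.sum_div, hsk, div_self hn0'.ne']
    have hstrict : q y1 < q y2 := by
      have hky1 : k y1 = fl y1 - 1 := by
        rw [hk_def]; simp [h12]
      have hklt : k y1 < k y2 := by
        by_cases h : fl y1 = 0
        · have h1 : k y1 = 0 := by rw [hky1, h]
          have h2' : k y2 ≠ 0 := by
            intro hc
            rw [hc] at hky2_ge
            push_cast at hky2_ge
            nlinarith [mul_pos hn0' (hapos y2)]
          omega
        · have h1 : (1:ℕ) ≤ fl y1 := Nat.one_le_iff_ne_zero.2 h
          have h2' : (k y1 : ℝ) = (fl y1 : ℝ) - 1 := by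
            rw [hky1, Nat.cast_sub h1]; norm_num
          have h3 : (k y1 : ℝ) < (k y2 : ℝ) := by
            have h4 : (fl y1 : ℝ) ≤ (n:ℝ) * a y1 := hfl_le y1
            rw [ha12] at h4
            linarith [hky2_ge]
          exact_mod_cast h3
      exact div_lt_div_of_pos_right (by exact_mod_cast hklt) hn0'
    -- KL upper bound
    have hbound : ∑ y, q y * Real.log (q y / p y)
        ≤ -Real.log S + (2 * CA + 2 * m * (CA + 1 / a y2)) / n := by
      have hsplit : ∑ y, q y * Real.log (q y / p y)
          = q y2 * Real.log (q y2 / p y2)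
            + ∑ y ∈ Finset.univ.erase y2, q y * Real.log (q y / p y) :=
        (Finset.add_sum_erase _ _ (Finset.mem_univ y2)).symm
      have hAsplit : ∑ y, a y * Real.log (a y / p y)
          = a y2 * Real.log (a y2 / p y2)
            + ∑ y ∈ Finset.univ.erase y2, a y * Real.log (a y / p y) :=
        (Finset.add_sum_erase _ _ (Finset.mem_univ y2)).symm
      have hrest : ∀ y ∈ Finset.univ.erase y2,
          q y * Real.log (q y / p y)
            ≤ a y * Real.log (a y / p y) + (2/(n:ℝ)) * |Real.log (a y / p y)| := by
        intro y hy
        have hyne : y ≠ y2 := Finset.ne_of_mem_erase hy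
        have hqa : q y ≤ a y := by
          rw [hq_def]; simp only
          rw [div_le_iff₀ hn0']
          calc (k y : ℝ) ≤ (n:ℝ) * a y := hk_le y hyne
            _ = a y * n := by ring
        have hga : a y - q y ≤ 2/(n:ℝ) := by
          rw [hq_def]; simp only
          have hc2 : (2/(n:ℝ))*n = 2 := by field_simp
          have h'' : a y - 2/(n:ℝ) ≤ (k y : ℝ)/n := by
            rw [le_div_iff₀ hn0']
            nlinarith [hk_ge y hyne]
          linarith
        calc q y * Real.log (q y / p y)
            ≤ a y * Real.log (a y / p y) + (a y - q y) * |Real.log (a y / p y)| :=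
              upper_floor (hfull y) (hapos y) (hq0 y) hqa
          _ ≤ a y * Real.log (a y / p y) + (2/(n:ℝ)) * |Real.log (a y / p y)| := by
              have := mul_le_mul_of_nonneg_right hga (abs_nonneg (Real.log (a y / p y)))
              linarith
      have hy2b : q y2 * Real.log (q y2 / p y2)
          ≤ a y2 * Real.log (a y2 / p y2) + (2*m/(n:ℝ)) * (|Real.log (a y2 / p y2)| + 1 / a y2) := by
        have haq : a y2 ≤ q y2 := by
          rw [hq_def]; simp only
          rw [le_div_iff₀ hn0']
          calc a y2 * n = (n:ℝ) * a y2 := by ring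
            _ ≤ (k y2 : ℝ) := hky2_ge
        have hq1 : q y2 ≤ 1 := by
          rw [hq_def]; simp only
          rw [div_le_one hn0']
          rw [hky2]
          have : (0:ℝ) ≤ t := by positivity
          linarith
        have hd : q y2 - a y2 ≤ 2*m/(n:ℝ) := by
          rw [hq_def]; simp only
          have hc2 : (2*m/(n:ℝ))*n = 2*m := by field_simp
          have h'' : (k y2 : ℝ)/n ≤ a y2 + 2*m/(n:ℝ) := by
            rw [div_le_iff₀ hn0']
            nlinarith [hky2_le]
          linarith
        calc q y2 * Real.log (q y2 / p y2)
            ≤ a y2 * Real.log (a y2 / p y2)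
              + (q y2 - a y2) * (|Real.log (a y2 / p y2)| + 1 / a y2) :=
              upper_ceil (hfull y2) (hapos y2) haq hq1
          _ ≤ _ := by
              have hnn : (0:ℝ) ≤ |Real.log (a y2 / p y2)| + 1 / a y2 := by
                have := abs_nonneg (Real.log (a y2 / p y2))
                have := (hapos y2)
                positivity
              have := mul_le_mul_of_nonneg_right hd hnn
              linarith
      have hsub : ∑ y ∈ Finset.univ.erase y2, |Real.log (a y / p y)| ≤ CA := by
        rw [hCA_def]
        exact Finset.sum_le_sum_of_subset_of_nonneg (Finset.erase_subset _ _)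
          (fun y _ _ => abs_nonneg _)
      have hstep : ∑ y ∈ Finset.univ.erase y2, q y * Real.log (q y / p y)
          ≤ ∑ y ∈ Finset.univ.erase y2, a y * Real.log (a y / p y)
            + (2/(n:ℝ)) * CA := by
        calc ∑ y ∈ Finset.univ.erase y2, q y * Real.log (q y / p y)
            ≤ ∑ y ∈ Finset.univ.erase y2,
                (a y * Real.log (a y / p y) + (2/(n:ℝ)) * |Real.log (a y / p y)|) :=
              Finset.sum_le_sum hrest
          _ = ∑ y ∈ Finset.univ.erase y2, a y * Real.log (a y / p y)
              + (2/(n:ℝ)) * ∑ y ∈ Finset.univ.erase y2, |Real.log (a y / p y)| := by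
              rw [Finset.sum_add_distrib, Finset.mul_sum]
          _ ≤ _ := by
              have h1 : (0:ℝ) ≤ 2/(n:ℝ) := by positivity
              have := mul_le_mul_of_nonneg_left hsub h1
              linarith
      have hy2b' : q y2 * Real.log (q y2 / p y2)
          ≤ a y2 * Real.log (a y2 / p y2) + (2*m/(n:ℝ)) * (CA + 1 / a y2) := by
        have h1 : (0:ℝ) ≤ 2*m/(n:ℝ) := by positivity
        have h2' : |Real.log (a y2 / p y2)| + 1 / a y2 ≤ CA + 1 / a y2 := by
          linarith [hCAy y2]
        have := mul_le_mul_of_nonneg_left h2' h1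
        linarith [hy2b]
      have hfin : a y2 * Real.log (a y2 / p y2)
          + ∑ y ∈ Finset.univ.erase y2, a y * Real.log (a y / p y) = -Real.log S := by
        rw [← hAsplit, hsumA]
      have halg : (2 * CA + 2 * m * (CA + 1 / a y2)) / n
          = (2/(n:ℝ)) * CA + (2*m/(n:ℝ)) * (CA + 1 / a y2) := by
        field_simp
      rw [hsplit, halg]
      linarith
    have hlb : ∀ d ∈ {d : ℝ | ∃ q' : Y → ℝ, (∀ y, 0 ≤ q' y) ∧ (∑ y, q' y = 1) ∧
        (∃ z, z ≠ y1 ∧ q' y1 ≤ q' z) ∧ d = ∑ y, q' y * Real.log (q' y / p y)},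
        -Real.log S ≤ d := by
      rintro d ⟨q', h0', h1', ⟨z, hz, hle⟩, rfl⟩
      have h5 := lower_aux p hfull hp1 y1 z hz (hmode z hz) q' h0' h1' hle
      have h6 := S_mono (hfull z) (hsec z hz) hp2lt.le (hpair z hz)
      rw [← hw_def, ← hS_def] at h6
      linarith
    have hmem : (∑ y, q y * Real.log (q y / p y)) ∈ {d : ℝ | ∃ q' : Y → ℝ,
        (∀ y, 0 ≤ q' y) ∧ (∑ y, q' y = 1) ∧
        (∃ z, z ≠ y1 ∧ q' y1 ≤ q' z) ∧ d = ∑ y, q' y * Real.log (q' y / p y)} :=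
      ⟨q, hq0, hqsum, ⟨y2, Ne.symm h12, hstrict.le⟩, rfl⟩
    have hsinf := le_csInf ⟨_, hmem⟩ hlb
    refine ⟨q, hq0, hqsum, fun y => ⟨k y, rfl⟩, ⟨y2, hstrict⟩, ?_⟩
    linarith
  · -- some zero-probability point
    push_neg at hfull
    obtain ⟨y0, hy0le⟩ := hfull
    have hy0 : p y0 = 0 := le_antisymm hy0le (hp0 y0)
    have hp2lt : p y2 < p y1 := hmode y2 (Ne.symm h12)
    have hp1pos : 0 < p y1 := lt_trans h2 hp2lt
    have hne : Nonempty Y := ⟨y1⟩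
    set e : ℝ := Real.exp 1 with he_def
    have he : 0 < e := Real.exp_pos 1
    have he2 : 2 < e := lt_trans (by norm_num) Real.exp_one_gt_d9
    have hloge : Real.log e = 1 := Real.log_exp 1
    have hlog1 : ∀ y, p y ≠ 0 → Real.log ((p y / e) / p y) = -1 := by
      intro y hy
      rw [div_div, mul_comm, ← div_div, div_self hy, one_div, Real.log_inv, hloge]
    have hy0ne1 : y0 ≠ y1 := fun h => by rw [h] at hy0; exact hp1pos.ne' hy0
    have hple1 : ∀ y, p y ≤ 1 := by
      intro y
      rw [← hp1]
      exact Finset.single_le_sum (fun i _ => hp0 i) (Finset.mem_univ y)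
    refine ⟨(Fintype.card Y : ℝ), fun n hn => ?_⟩
    have hn0 : 0 < n := lt_trans Fintype.card_pos hn
    have hn0' : (0:ℝ) < n := by exact_mod_cast hn0
    set fl : Y → ℕ := fun y => ⌊(n:ℝ) * (p y / e)⌋₊ with hfl_def
    set t : ℕ := ∑ y ∈ Finset.univ.erase y0, fl y with ht_def
    set k : Y → ℕ := fun y => if y = y0 then n - t else fl y with hk_def
    set q : Y → ℝ := fun y => (k y : ℝ) / n with hq_def
    have hfl_le : ∀ y, (fl y : ℝ) ≤ (n:ℝ) * (p y / e) := by
      intro y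
      exact Nat.floor_le (mul_nonneg (by positivity) (div_nonneg (hp0 y) he.le))
    have hfl_gt : ∀ y, (n:ℝ) * (p y / e) - 1 < fl y := by
      intro y
      have := Nat.lt_floor_add_one ((n:ℝ) * (p y / e))
      linarith
    have ht_le : (t:ℝ) ≤ (n:ℝ) / e := by
      have h1 : (t:ℝ) = ∑ y ∈ Finset.univ.erase y0, (fl y : ℝ) := by
        rw [ht_def]; push_cast; ring
      have h2' : ∑ y ∈ Finset.univ.erase y0, (fl y : ℝ)
          ≤ ∑ y ∈ Finset.univ.erase y0, (n:ℝ) * (p y / e) :=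
        Finset.sum_le_sum (fun y _ => hfl_le y)
      have h3 : ∑ y ∈ Finset.univ.erase y0, (n:ℝ) * (p y / e)
          ≤ ∑ y, (n:ℝ) * (p y / e) :=
        Finset.sum_le_sum_of_subset_of_nonneg (Finset.erase_subset _ _)
          (fun y _ _ => mul_nonneg (by positivity) (div_nonneg (hp0 y) he.le))
      have h4 : ∑ y, (n:ℝ) * (p y / e) = (n:ℝ) / e := by
        rw [← Finset.mul_sum, ← Finset.sum_div, hp1]; ring
      linarith
    have ht_lt : t < n := by
      have : (t:ℝ) < n := by
        have : (n:ℝ)/e < n := by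
          rw [div_lt_iff₀ he]; nlinarith
        linarith
      exact_mod_cast this
    have hky0 : (k y0 : ℝ) = (n:ℝ) - t := by
      rw [hk_def]; simp only [if_pos rfl]
      exact_mod_cast Nat.cast_sub ht_lt.le
    have hkfl : ∀ y, y ≠ y0 → k y = fl y := by
      intro y hy; rw [hk_def]; simp only [if_neg hy]
    have hq0 : ∀ y, 0 ≤ q y := fun y => by positivity
    have hqsum : ∑ y, q y = 1 := by
      have hsk : ∑ y, (k y : ℝ) = (n:ℝ) := by
        rw [← Finset.add_sum_erase _ _ (Finset.mem_univ y0), hky0]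
        have : ∑ y ∈ Finset.univ.erase y0, (k y : ℝ) = (t:ℝ) := by
          rw [ht_def]
          push_cast
          exact Finset.sum_congr rfl (fun y hy => by
            rw [hkfl y (Finset.ne_of_mem_erase hy)])
        rw [this]; ring
      rw [hq_def]
      simp only
      rw [← Finset.sum_div, hsk, div_self hn0'.ne']
    have hstrict : q y1 < q y0 := by
      have h1 : (k y1 : ℝ) ≤ (n:ℝ)/e := by
        rw [hkfl y1 (Ne.symm hy0ne1)]
        have h1' : (n:ℝ) * (p y1 / e) ≤ (n:ℝ)/e := by
          rw [mul_div_assoc']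
          gcongr
          nlinarith [hple1 y1, hn0']
        linarith [hfl_le y1]
      have hcanc : (n:ℝ)/e * e = n := div_mul_cancel₀ _ he.ne'
      have h2' : (n:ℝ)/e < (n:ℝ) - (n:ℝ)/e := by
        nlinarith [mul_pos (div_pos hn0' he) (sub_pos.2 he2)]
      have h3 : (k y1 : ℝ) < (k y0 : ℝ) := by rw [hky0]; linarith
      exact div_lt_div_of_pos_right h3 hn0'
    -- KL bound
    have hpt : ∀ y, q y * Real.log (q y / p y) ≤ -(p y / e) + 1/(n:ℝ) := by
      intro y
      by_cases hy : y = y0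
      · subst hy
        rw [hy0, div_zero, Real.log_zero, mul_zero]
        simp only [zero_div, neg_zero, zero_add]
        positivity
      · rcases eq_or_lt_of_le (hp0 y) with hpy | hpy
        · have hq0' : q y = 0 := by
            rw [hq_def]; simp only
            rw [hkfl y hy, hfl_def]; simp only
            rw [← hpy, zero_div, mul_zero, Nat.floor_zero, Nat.cast_zero, zero_div]
          rw [hq0', zero_mul, ← hpy]
          simp only [zero_div, neg_zero, zero_add]
          positivity
        · have hxa : q y ≤ p y / e := by
            rw [hq_def]; simp only
            rw [hkfl y hy]
            rw [div_le_iff₀ hn0']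
            calc (fl y : ℝ) ≤ (n:ℝ) * (p y / e) := hfl_le y
              _ = p y / e * n := by ring
          have hub := upper_floor hpy (by positivity) (hq0 y) hxa
          rw [hlog1 y hpy.ne'] at hub
          have hax : p y / e - q y ≤ 1/(n:ℝ) := by
            rw [hq_def]; simp only
            rw [hkfl y hy]
            have hgt := hfl_gt y
            have hc : (1/(n:ℝ))*n = 1 := by field_simp
            have h' : (p y / e - 1/(n:ℝ)) < (fl y:ℝ)/n := by
              rw [lt_div_iff₀ hn0']; nlinarith
            linarith
          calc q y * Real.log (q y / p y)
              ≤ p y / e * (-1) + (p y / e - q y) * |(-1:ℝ)| := hub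
            _ ≤ -(p y / e) + 1/(n:ℝ) := by
                rw [abs_neg, abs_one]; nlinarith
    skip
    have hsumneg : ∑ y, -(p y / e) = -(1/e) := by
      rw [Finset.sum_neg_distrib, ← Finset.sum_div, hp1]
    have hF : ∑ y, q y * Real.log (q y / p y) ≤ -(1/e) + (Fintype.card Y : ℝ)/(n:ℝ) := by
      calc ∑ y, q y * Real.log (q y / p y) ≤ ∑ y, (-(p y / e) + 1/(n:ℝ)) :=
            Finset.sum_le_sum (fun y _ => hpt y)
        _ = -(1/e) + (Fintype.card Y : ℝ)/(n:ℝ) := by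
            rw [Finset.sum_add_distrib, hsumneg, Finset.sum_const, Finset.card_univ,
              nsmul_eq_mul]
            ring
    have hmem : (∑ y, q y * Real.log (q y / p y)) ∈ {d : ℝ | ∃ q' : Y → ℝ, (∀ y, 0 ≤ q' y) ∧ (∑ y, q' y = 1) ∧
                (∃ z, z ≠ y1 ∧ q' y1 ≤ q' z) ∧ d = ∑ y, q' y * Real.log (q' y / p y)} :=
      ⟨q, hq0, hqsum, ⟨y0, hy0ne1, hstrict.le⟩, rfl⟩
    have hlb : ∀ d ∈ {d : ℝ | ∃ q' : Y → ℝ, (∀ y, 0 ≤ q' y) ∧ (∑ y, q' y = 1) ∧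
                (∃ z, z ≠ y1 ∧ q' y1 ≤ q' z) ∧ d = ∑ y, q' y * Real.log (q' y / p y)}, -(1/e) ≤ d := by
      rintro d ⟨q', hq'0, hq's, -, rfl⟩
      have hptl : ∀ y, -(p y / e) ≤ q' y * Real.log (q' y / p y) := by
        intro y
        rcases eq_or_lt_of_le (hp0 y) with hpy | hpy
        · rw [← hpy, div_zero, Real.log_zero, mul_zero]
          norm_num
        · have htl := tangent_le (p := p y) (a := p y / e) (x := q' y) hpy
            (by positivity) (hq'0 y)
          rw [hlog1 y hpy.ne'] at htl
          linarith
      calc -(1/e) = ∑ y, -(p y / e) := hsumneg.symm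
        _ ≤ _ := Finset.sum_le_sum (fun y _ => hptl y)
    have hsinf : -(1/e) ≤ sInf {d : ℝ | ∃ q' : Y → ℝ, (∀ y, 0 ≤ q' y) ∧ (∑ y, q' y = 1) ∧
                (∃ z, z ≠ y1 ∧ q' y1 ≤ q' z) ∧ d = ∑ y, q' y * Real.log (q' y / p y)} := le_csInf ⟨_, hmem⟩ hlb
    refine ⟨q, hq0, hqsum, fun y => ⟨k y, rfl⟩, ⟨y0, hstrict⟩, ?_⟩
    linarith
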